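/- In the cycle convexity on the join G = G1 ∨ G2 where |V(G1)|, |V(G2)| ≥ 2, for any vertex v ∈ V(G1) and any two vertices u, w ∈ V(G2), the convex hull of {v, u, w} is all of V(G). -/

import Mathlib

open SimpleGraph Set

variable {V : Type*}

/-- The interval function of the cycle convexity: `S` together with all vertices `u` such that
the subgraph induced by `S ∪ {u}` has a cycle containing `u`. -/
def cycInt (G : SimpleGraph V) (S : Set V) : Set V :=
  S ∪ {u | ∃ w : G.Walk u u, w.IsCycle ∧ ∀ x ∈ w.support, x ∈ S ∪ {u}}

/-- The convex hull in the cycle convexity, obtained by iterating `cycInt`. -/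
def cycHull (G : SimpleGraph V) (S : Set V) : Set V :=
  ⋃ k, (cycInt G)^[k] S

/-- A set is convex in the cycle convexity iff it is a fixed point of the interval function. -/
def CycConvex (G : SimpleGraph V) (S : Set V) : Prop := cycInt G S = S

/-- A hull set: a set whose convex hull is the whole vertex set. -/
def IsHullSet (G : SimpleGraph V) (S : Set V) : Prop := cycHull G S = Set.univ

/-- The convexity number: the largest cardinality of a convex set different from `V(G)`. -/
noncomputable def conNum (G : SimpleGraph V) : ℕ :=
  sSup {n | ∃ S : Set V, CycConvex G S ∧ S ≠ Set.univ ∧ S.ncard = n}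

/-- The percolation time: the largest `k > 0` such that some hull set `S` satisfies
`I^[k-1] S ≠ V(G)`; `0` if no such `k` exists. -/
noncomputable def percTime (G : SimpleGraph V) : ℕ :=
  sSup {k | 0 < k ∧ ∃ S : Set V, IsHullSet G S ∧ (cycInt G)^[k-1] S ≠ Set.univ}

/-- A set is convexly independent if no element lies in the hull of the others. -/
def ConvIndep (G : SimpleGraph V) (S : Set V) : Prop :=
  ∀ v ∈ S, v ∉ cycHull G (S \ {v})

/-- The independence number (as a supremum of cardinalities of independent sets). -/
noncomputable def alphaNum (G : SimpleGraph V) : ℕ :=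
  sSup {n | ∃ S : Set V, S.Pairwise (fun a b => ¬ G.Adj a b) ∧ S.ncard = n}

/-- The join of two graphs: their disjoint union together with all edges between the parts. -/
def joinGraph {V1 V2 : Type*} (G1 : SimpleGraph V1) (G2 : SimpleGraph V2) :
    SimpleGraph (V1 ⊕ V2) where
  Adj x y :=
    (∃ a b, x = Sum.inl a ∧ y = Sum.inl b ∧ G1.Adj a b) ∨
    (∃ a b, x = Sum.inr a ∧ y = Sum.inr b ∧ G2.Adj a b) ∨
    (∃ a b, x = Sum.inl a ∧ y = Sum.inr b) ∨
    (∃ a b, x = Sum.inr a ∧ y = Sum.inl b)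
  symm := by
    constructor
    rintro x y (⟨a,b,rfl,rfl,h⟩|⟨a,b,rfl,rfl,h⟩|⟨a,b,rfl,rfl⟩|⟨a,b,rfl,rfl⟩)
    · exact Or.inl ⟨b, a, rfl, rfl, h.symm⟩
    · exact Or.inr (Or.inl ⟨b, a, rfl, rfl, h.symm⟩)
    · exact Or.inr (Or.inr (Or.inr ⟨b, a, rfl, rfl⟩))
    · exact Or.inr (Or.inr (Or.inl ⟨b, a, rfl, rfl⟩))
  loopless := by
    constructor
    rintro x (⟨a,b,rfl,h,hadj⟩|⟨a,b,rfl,h,hadj⟩|⟨a,b,rfl,h⟩|⟨a,b,rfl,h⟩) <;>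
      simp_all

lemma isCycle_four {G : SimpleGraph V} {a b c d : V}
    (hab : G.Adj a b) (hbc : G.Adj b c) (hcd : G.Adj c d) (hda : G.Adj d a)
    (hac : a ≠ c) (hbd : b ≠ d) :
    (Walk.cons hab (Walk.cons hbc (Walk.cons hcd (Walk.cons hda Walk.nil)))).IsCycle := by
  have h1 := hab.ne
  have h2 := hbc.ne
  have h3 := hcd.ne
  have h4 := hda.ne
  simp [Walk.isCycle_def, Walk.isTrail_def, List.Nodup, Sym2.eq, Sym2.rel_iff',
    h1, h2, h3, h4, hac, hbd, h1.symm, h2.symm, h3.symm, h4.symm, hac.symm, hbd.symm,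
    Prod.ext_iff]

lemma isCycle_four_support {G : SimpleGraph V} {a b c d : V}
    (hab : G.Adj a b) (hbc : G.Adj b c) (hcd : G.Adj c d) (hda : G.Adj d a) :
    (Walk.cons hab (Walk.cons hbc (Walk.cons hcd (Walk.cons hda Walk.nil)))).support
      = [a, b, c, d, a] := by
  simp [Walk.support]

theorem stmt_8 {V1 V2 : Type*} [Fintype V1] [Fintype V2]
    (G1 : SimpleGraph V1) (G2 : SimpleGraph V2)
    (h1 : 2 ≤ Fintype.card V1) (h2 : 2 ≤ Fintype.card V2)
    (v : V1) (u w : V2) (huw : u ≠ w) :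
    cycHull (joinGraph G1 G2) {Sum.inl v, Sum.inr u, Sum.inr w} = Set.univ := by
  set G := joinGraph G1 G2
  set S : Set (V1 ⊕ V2) := {Sum.inl v, Sum.inr u, Sum.inr w}
  have hsub : ∀ T : Set (V1 ⊕ V2), T ⊆ cycInt G T := fun T => Set.subset_union_left
  have hcross : ∀ (a : V1) (b : V2), G.Adj (Sum.inl a) (Sum.inr b) := fun a b =>
    Or.inr (Or.inr (Or.inl ⟨a, b, rfl, rfl⟩))
  have hcross' : ∀ (b : V2) (a : V1), G.Adj (Sum.inr b) (Sum.inl a) := fun b a =>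
    (hcross a b).symm
  -- Step 1: every `inl a` is in `cycInt G S`.
  have step1 : ∀ a : V1, Sum.inl a ∈ cycInt G S := by
    intro a
    by_cases hav : a = v
    · subst hav; exact hsub S (by left; rfl)
    · right
      refine ⟨Walk.cons (hcross a u) (Walk.cons (hcross' u v)
          (Walk.cons (hcross v w) (Walk.cons (hcross' w a) Walk.nil))), ?_, ?_⟩
      · exact isCycle_four _ _ _ _ (by simp [hav]) (by simp [huw])
      · rw [isCycle_four_support]
        intro x hx
        simp only [List.mem_cons, List.not_mem_nil, or_false] at hx
        rcases hx with rfl | rfl | rfl | rfl | rfl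
        · right; rfl
        · left; right; left; rfl
        · left; left; rfl
        · left; right; right; rfl
        · right; rfl
  -- Step 2: everything is in `cycInt G (cycInt G S)`.
  have step2 : ∀ x : V1 ⊕ V2, x ∈ cycInt G (cycInt G S) := by
    intro x
    cases x with
    | inl a => exact hsub _ (step1 a)
    | inr b =>
      by_cases hbu : b = u
      · subst hbu; exact hsub _ (hsub S (by right; left; rfl))
      · obtain ⟨v', hv'⟩ := Fintype.exists_ne_of_one_lt_card (by omega) v
        right
        refine ⟨Walk.cons (hcross' b v) (Walk.cons (hcross v u)
            (Walk.cons (hcross' u v') (Walk.cons (hcross v' b) Walk.nil))), ?_, ?_⟩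
        · exact isCycle_four _ _ _ _ (by simp [hbu]) (by simp [hv'.symm])
        · rw [isCycle_four_support]
          intro x hx
          simp only [List.mem_cons, List.not_mem_nil, or_false] at hx
          rcases hx with rfl | rfl | rfl | rfl | rfl
          · right; rfl
          · left; exact step1 v
          · left; exact hsub S (by right; left; rfl)
          · left; exact step1 v'
          · right; rfl
  have h2 : (cycInt G)^[2] S = Set.univ := by
    apply Set.eq_univ_of_forall
    intro x
    have : (cycInt G)^[2] S = cycInt G (cycInt G S) := by
      simp [Function.iterate_succ', Function.iterate_one]
    rw [this]; exact step2 x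
  apply Set.eq_univ_of_forall
  intro x
  exact Set.mem_iUnion.2 ⟨2, h2 ▸ Set.mem_univ x⟩
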